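/- For each d ≥ 1, there is an arrangement of d lines in projective 3-space over an infinite field whose defining ideal I satisfies reg(I) ≥ d. Specifically, if L is a fixed line and the d lines are general lines each meeting L in d distinct points (with L not one of the d lines), then any homogeneous f ∈ I of degree < d vanishes on L, so I has a minimal generator of degree ≥ d and reg(I) ≥ d. -/

import Mathlib

open MvPolynomial
attribute [local instance] MvPolynomial.gradedAlgebra

/-- The polynomial ring `S = k[x_0, …, x_n]`. -/
noncomputable abbrev MvP (k : Type*) [Field k] (n : ℕ) : Type _ := MvPolynomial (Fin (n+1)) k

/-- An ideal generated by linear forms. -/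
def IsLinearIdeal {k : Type*} [Field k] {n : ℕ} (I : Ideal (MvP k n)) : Prop :=
  ∃ T : Set (MvP k n), T ⊆ (homogeneousSubmodule (Fin (n+1)) k 1 : Submodule k (MvP k n)) ∧
    I = Ideal.span T

/-- `I` is `r`-regular (Castelnuovo–Mumford): there is a graded free resolution
`⋯ → ⊕_α S(-e_{α,i}) → ⋯ → ⊕_α S(-e_{α,0}) → I → 0` with all `e_{α,i} ≤ r + i`.
The `i`-th free module is `Fin (ρ i) → S` with generator degrees `e i`; gradedness of the
maps is expressed by homogeneity of the matrix entries (images of the standard basis). -/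
def IdealIsRegular {k : Type*} [Field k] {n : ℕ} (I : Ideal (MvP k n)) (r : ℤ) : Prop :=
  ∃ (ρ : ℕ → ℕ) (e : ∀ i, Fin (ρ i) → ℕ)
    (δ : ∀ i, (Fin (ρ (i+1)) → MvP k n) →ₗ[MvP k n] (Fin (ρ i) → MvP k n))
    (ε : (Fin (ρ 0) → MvP k n) →ₗ[MvP k n] MvP k n),
    LinearMap.range ε = I ∧
    LinearMap.ker ε = LinearMap.range (δ 0) ∧
    (∀ i, LinearMap.ker (δ i) = LinearMap.range (δ (i+1))) ∧
    (∀ β, ε (Pi.single β 1) ∈ homogeneousSubmodule (Fin (n+1)) k (e 0 β)) ∧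
    (∀ i (β : Fin (ρ (i+1))) (α : Fin (ρ i)), δ i (Pi.single β 1) α = 0 ∨
      (e i α ≤ e (i+1) β ∧
        δ i (Pi.single β 1) α ∈ homogeneousSubmodule (Fin (n+1)) k (e (i+1) β - e i α))) ∧
    (∀ i (β : Fin (ρ i)), (e i β : ℤ) ≤ r + i)

/-- The Castelnuovo–Mumford regularity of `I`, the least `r` such that `I` is `r`-regular. -/
noncomputable def idealReg {k : Type*} [Field k] {n : ℕ} (I : Ideal (MvP k n)) : ℤ :=
  sInf {r : ℤ | IdealIsRegular I r}

/- ### Auxiliary material -/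

lemma prod_primes_dvd' {R : Type*} [CommMonoidWithZero R] [IsCancelMulZero R] {ι : Type*}
    (s : Finset ι) (p : ι → R) (hp : ∀ i ∈ s, Prime (p i))
    (hnd : ∀ i ∈ s, ∀ j ∈ s, i ≠ j → ¬ p i ∣ p j)
    {f : R} (hf : ∀ i ∈ s, p i ∣ f) : (∏ i ∈ s, p i) ∣ f := by
  classical
  induction s using Finset.induction_on with
  | empty => simpa using one_dvd f
  | @insert a s ha ih =>
      rw [Finset.prod_insert ha]
      obtain ⟨h, hh⟩ := ih (fun i hi => hp i (Finset.mem_insert_of_mem hi))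
        (fun i hi j hj => hnd i (Finset.mem_insert_of_mem hi) j (Finset.mem_insert_of_mem hj))
        (fun i hi => hf i (Finset.mem_insert_of_mem hi))
      have hpa : Prime (p a) := hp a (Finset.mem_insert_self a s)
      have hnd' : ¬ p a ∣ ∏ i ∈ s, p i := by
        intro hdvd
        obtain ⟨j, hj, hdj⟩ := hpa.exists_mem_finset_dvd hdvd
        exact hnd a (Finset.mem_insert_self a s) j (Finset.mem_insert_of_mem hj)
          (by rintro rfl; exact ha hj) hdj
      have : p a ∣ (∏ i ∈ s, p i) * h := hh ▸ hf a (Finset.mem_insert_self a s)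
      rcases hpa.dvd_or_dvd this with h1 | h1
      · exact absurd h1 hnd'
      · obtain ⟨h', rfl⟩ := h1
        exact ⟨h', by rw [hh, mul_left_comm, mul_assoc]⟩

noncomputable section
namespace RegSharp

variable {k : Type*} [Field k] {d : ℕ}

/-- The linear form `x₀ - cᵢ x₁`. -/
def ell (c : Fin d → k) (i : Fin d) : MvP k 3 := X 0 - C (c i) * X 1

/-- The product of the `d` linear forms. -/
def Pp (c : Fin d → k) : MvP k 3 := ∏ i, ell c i

/-- Substitution `x₃ ↦ 0`. -/
def pr : MvP k 3 →ₐ[k] MvP k 3 := aeval (fun j : Fin 4 => if j = 3 then 0 else X j)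

/-- Restriction to the line `x₁ = 1, x₂ = x₃ = 0` (dehomogenized). -/
def ps : MvP k 3 →ₐ[k] Polynomial k := aeval ![Polynomial.X, 1, 0, 0]

variable (c : Fin d → k)

lemma pr_X3 : pr (k := k) (X 3) = 0 := by simp [pr]

lemma pr_ell (i : Fin d) : pr (ell c i) = ell c i := by
  simp [pr, ell]

lemma pr_Pp : pr (Pp c) = Pp c := by
  unfold Pp; rw [map_prod]; exact Finset.prod_congr rfl fun i _ => pr_ell c i

lemma sub_pr_mem (f : MvP k 3) : f - pr f ∈ Ideal.span {(X 3 : MvP k 3)} := by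
  induction f using MvPolynomial.induction_on with
  | C a => simp [pr]
  | add p q hp hq => simpa [sub_add_sub_comm] using Ideal.add_mem _ hp hq
  | mul_X p i hp =>
      have : p * X i - pr (p * X i) = (p - pr p) * X i + pr p * (X i - pr (X i)) := by
        rw [map_mul]; ring
      rw [this]
      refine Ideal.add_mem _ (Ideal.mul_mem_right _ _ hp) ?_
      by_cases h : i = 3
      · subst h; rw [pr_X3, sub_zero]
        exact Ideal.mul_mem_left _ _ (Ideal.subset_span rfl)
      · have : pr (k := k) (X i) = X i := by simp [pr, h]
        simp [this]

/-- Membership criterion for the ideal `(x₃, g)` when `g` has no `x₃`. -/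
lemma mem_span_X3_iff {g f : MvP k 3} (hg : pr g = g) :
    f ∈ Ideal.span {(X 3 : MvP k 3), g} ↔ g ∣ pr f := by
  constructor
  · rintro hf
    obtain ⟨a, b, rfl⟩ := Ideal.mem_span_pair.mp hf
    rw [map_add, map_mul, map_mul, pr_X3, mul_zero, zero_add, hg]
    exact Dvd.intro_left _ rfl
  · rintro ⟨h, hh⟩
    have h1 : f - pr f ∈ Ideal.span {(X 3 : MvP k 3), g} :=
      Ideal.span_mono (Set.singleton_subset_iff.mpr (by simp)) (sub_pr_mem f)
    have h2 : pr f ∈ Ideal.span {(X 3 : MvP k 3), g} := by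
      rw [hh]
      exact Ideal.mul_mem_right _ _ (Ideal.subset_span (by simp))
    simpa using Ideal.add_mem _ h1 h2

lemma ell_prime (i : Fin d) : Prime (ell c i) := by
  have h1 : (1 : Fin 4) = Fin.succ (0 : Fin 3) := rfl
  have hC : MvPolynomial.finSuccEquiv k 3 (C (c i)) = Polynomial.C (C (c i)) := by
    simp [finSuccEquiv_apply]
  have hX1 : MvPolynomial.finSuccEquiv k 3 (X 1) = Polynomial.C (X 0) := by
    rw [h1, finSuccEquiv_X_succ]
  have heq : (MvPolynomial.finSuccEquiv k 3) (ell c i)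
      = Polynomial.X - Polynomial.C (C (c i) * X 0) := by
    rw [ell, map_sub, map_mul, hC, hX1, finSuccEquiv_X_zero, ← Polynomial.C_mul]
  have key : Prime ((MvPolynomial.finSuccEquiv k 3) (ell c i)) := by
    rw [heq]; exact Polynomial.prime_X_sub_C _
  exact (MulEquiv.prime_iff (MvPolynomial.finSuccEquiv k 3)).mp key

lemma eval_ell (q : Fin 4 → k) (i : Fin d) : eval q (ell c i) = q 0 - c i * q 1 := by
  simp [ell]

lemma ell_not_dvd {c : Fin d → k} (hc : Function.Injective c) {i j : Fin d} (h : i ≠ j) :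
    ¬ ell c i ∣ ell c j := by
  intro hdvd
  have := map_dvd (eval ![c i, 1, 0, 0] : MvP k 3 →+* k) hdvd
  rw [eval_ell, eval_ell] at this
  simp only [Matrix.cons_val_zero, Matrix.cons_val_one, Matrix.head_cons, mul_one, sub_self,
    zero_dvd_iff, sub_eq_zero] at this
  exact h (hc this)

lemma ell_homog (i : Fin d) : (ell c i).IsHomogeneous 1 := by
  apply MvPolynomial.IsHomogeneous.sub (isHomogeneous_X _ _)
  simpa using ((isHomogeneous_X k (1 : Fin 4)).C_mul (c i))

lemma Pp_homog : (Pp c).IsHomogeneous d := by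
  have := MvPolynomial.IsHomogeneous.prod Finset.univ (ell c) (fun _ => 1)
    (fun i _ => ell_homog c i)
  simpa [Pp] using this

lemma ell_ne_zero (i : Fin d) : ell c i ≠ 0 := by
  intro h
  have := congrArg (eval ![(1:k), 0, 0, 0]) h
  simp [ell] at this

lemma Pp_ne_zero : Pp c ≠ 0 :=
  Finset.prod_ne_zero_iff.mpr fun i _ => ell_ne_zero c i

lemma ps_ell (i : Fin d) : ps (ell c i) = Polynomial.X - Polynomial.C (c i) := by
  simp [ps, ell]

lemma ps_X3 : ps (k := k) (X 3) = 0 := by simp [ps]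

lemma ps_Pp : ps (Pp c) = ∏ i, (Polynomial.X - Polynomial.C (c i)) := by
  unfold Pp; rw [map_prod]; exact Finset.prod_congr rfl fun i _ => ps_ell c i

lemma natDegree_ps_le (f : MvP k 3) : (ps f).natDegree ≤ f.totalDegree := by
  rw [ps, aeval_def, eval₂_eq]
  apply Polynomial.natDegree_sum_le_of_forall_le
  intro m hm
  refine le_trans (Polynomial.natDegree_mul_le) ?_
  have h1 : (algebraMap k (Polynomial k) (coeff m f)).natDegree = 0 :=
    Polynomial.natDegree_C _
  rw [h1, zero_add]
  refine le_trans (Polynomial.natDegree_prod_le _ _) (le_trans ?_ (le_totalDegree hm))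
  have hterm : ∀ i : Fin 4,
      (((![Polynomial.X, 1, 0, 0] : Fin 4 → Polynomial k) i) ^ (m i)).natDegree ≤ m i := by
    intro i
    fin_cases i <;> simp [Polynomial.natDegree_pow]
  calc ∑ i ∈ m.support, (((![Polynomial.X, 1, 0, 0] : Fin 4 → Polynomial k) i) ^ (m i)).natDegree
      ≤ ∑ i ∈ m.support, m i := Finset.sum_le_sum (fun i _ => hterm i)
    _ = _ := by rw [Finsupp.sum]

/-- The ideal of the `i`-th line. -/
def Iline (i : Fin d) : Ideal (MvP k 3) := Ideal.span {X 3, ell c i}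

lemma X3_mem (i : Fin d) : (X 3 : MvP k 3) ∈ Iline c i :=
  Ideal.subset_span (by simp)

lemma ell_mem (i : Fin d) : ell c i ∈ Iline c i :=
  Ideal.subset_span (by simp)

lemma Pp_mem (i : Fin d) : Pp c ∈ Iline c i := by
  obtain ⟨t, ht⟩ := Finset.dvd_prod_of_mem (ell c) (Finset.mem_univ i)
  rw [Pp, ht]
  exact Ideal.mul_mem_right _ _ (ell_mem c i)

lemma iInf_Iline_eq {c : Fin d → k} (hc : Function.Injective c) :
    (⨅ i, Iline c i) = Ideal.span {(X 3 : MvP k 3), Pp c} := by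
  apply le_antisymm
  · intro f hf
    rw [Submodule.mem_iInf] at hf
    have hf' : ∀ i, ell c i ∣ pr f := fun i =>
      (mem_span_X3_iff (pr_ell c i)).mp (hf i)
    have hdvd : Pp c ∣ pr f := by
      rw [Pp]
      exact prod_primes_dvd' _ _ (fun i _ => ell_prime c i)
        (fun i _ j _ hij => ell_not_dvd hc hij) (fun i _ => hf' i)
    exact (mem_span_X3_iff (pr_Pp c)).mpr hdvd
  · refine le_iInf fun i => Ideal.span_le.mpr ?_
    rintro x (rfl | rfl)
    · exact X3_mem c i
    · exact Pp_mem c i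

/-- The Koszul syzygy: kernel of `(a,b) ↦ a x₃ + b P`. -/
lemma koszul {a b : MvP k 3} (h : a * X 3 + b * Pp c = 0) :
    ∃ t : MvP k 3, a = t * (-(Pp c)) ∧ b = t * X 3 := by
  have hp : pr b * Pp c = 0 := by
    have := congrArg (pr (k := k)) h
    simpa [map_add, map_mul, pr_X3, pr_Pp] using this
  have hb0 : pr b = 0 := by
    rcases mul_eq_zero.mp hp with h' | h'
    · exact h'
    · exact absurd h' (Pp_ne_zero c)
  have hbmem : b ∈ Ideal.span {(X 3 : MvP k 3)} := by
    have := sub_pr_mem b; rwa [hb0, sub_zero] at this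
  obtain ⟨t, ht⟩ := Ideal.mem_span_singleton'.mp hbmem
  refine ⟨t, ?_, by rw [← ht]⟩
  have hX3 : (X 3 : MvP k 3) ≠ 0 := MvPolynomial.X_ne_zero _
  have : (a + t * Pp c) * X 3 = 0 := by
    rw [← ht] at h
    ring_nf
    ring_nf at h
    linear_combination h
  rcases mul_eq_zero.mp this with h' | h'
  · have : a = - (t * Pp c) := by linear_combination h'
    rw [this]; ring
  · exact absurd h' hX3


variable (k d)

/-- ranks of the free resolution `0 → S → S² → I → 0`. -/
def rho : ℕ → ℕ
  | 0 => 2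
  | 1 => 1
  | _+2 => 0

/-- generator degrees. -/
def ee : ∀ i, Fin (rho i) → ℕ
  | 0 => ![1, d]
  | 1 => ![d+1]
  | _+2 => Fin.elim0

variable {k d}

/-- the augmentation `(a,b) ↦ a x₃ + b P`. -/
def eps : (Fin 2 → MvP k 3) →ₗ[MvP k 3] MvP k 3 where
  toFun v := v 0 * X 3 + v 1 * Pp c
  map_add' v w := by simp only [Pi.add_apply]; ring
  map_smul' r v := by simp only [Pi.smul_apply, smul_eq_mul, RingHom.id_apply]; ring

/-- the Koszul syzygy map `t ↦ (-tP, t x₃)`. -/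
def dlt : (Fin 1 → MvP k 3) →ₗ[MvP k 3] (Fin 2 → MvP k 3) where
  toFun v := fun α => v 0 * (![-(Pp c), X 3] α)
  map_add' v w := by funext α; simp only [Pi.add_apply]; ring
  map_smul' r v := by
    funext α; simp only [Pi.smul_apply, smul_eq_mul, RingHom.id_apply]; ring

/-- the whole tail of the resolution. -/
def dlts : ∀ i, (Fin (rho (i+1)) → MvP k 3) →ₗ[MvP k 3] (Fin (rho i) → MvP k 3)
  | 0 => dlt c
  | _+1 => 0

lemma range_eps : LinearMap.range (eps c) = Ideal.span {(X 3 : MvP k 3), Pp c} := by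
  ext f
  constructor
  · rintro ⟨v, rfl⟩
    exact Ideal.mem_span_pair.mpr ⟨v 0, v 1, rfl⟩
  · intro hf
    obtain ⟨a, b, hab⟩ := Ideal.mem_span_pair.mp hf
    exact ⟨![a, b], by simp [eps, hab]⟩

lemma ker_eps : LinearMap.ker (eps c) = LinearMap.range (dlt c) := by
  ext v
  simp only [LinearMap.mem_ker, LinearMap.mem_range]
  constructor
  · intro hv
    obtain ⟨t, ha, hb⟩ := koszul c hv
    refine ⟨fun _ => t, ?_⟩
    funext α
    fin_cases α
    · simpa [dlt] using ha.symm
    · simpa [dlt] using hb.symm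
  · rintro ⟨w, rfl⟩
    simp [dlt, eps]
    ring

lemma ker_dlt : LinearMap.ker (dlt c) = ⊥ := by
  ext v
  simp only [LinearMap.mem_ker, Submodule.mem_bot]
  constructor
  · intro hv
    have h1 : v 0 * X 3 = 0 := by
      have := congrFun hv 1
      simpa [dlt] using this
    have hv0 : v 0 = 0 := by
      rcases mul_eq_zero.mp h1 with h | h
      · exact h
      · exact absurd h (MvPolynomial.X_ne_zero _)
    funext α
    have : α = 0 := Subsingleton.elim _ _
    rw [this]; exact hv0
  · rintro rfl
    funext α; simp [dlt]

lemma eps_single0 : eps c (Pi.single (0 : Fin 2) (1 : MvP k 3)) = X 3 := by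
  simp [eps, Pi.single_apply]

lemma eps_single1 : eps c (Pi.single (1 : Fin 2) (1 : MvP k 3)) = Pp c := by
  simp [eps, Pi.single_apply]

lemma dlt_single (α : Fin 2) :
    dlt c (Pi.single (0 : Fin 1) (1 : MvP k 3)) α = ![-(Pp c), X 3] α := by
  simp [dlt, Pi.single_apply]

lemma cond_eps (β : Fin 2) :
    eps c (Pi.single β (1 : MvP k 3)) ∈ homogeneousSubmodule (Fin 4) k (ee d 0 β) := by
  fin_cases β
  · rw [show ((⟨0, by omega⟩ : Fin 2)) = 0 from rfl, eps_single0]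
    exact (mem_homogeneousSubmodule _ _).mpr (isHomogeneous_X _ _)
  · rw [show ((⟨1, by omega⟩ : Fin 2)) = 1 from rfl, eps_single1]
    exact (mem_homogeneousSubmodule _ _).mpr (Pp_homog c)

lemma cond_dlt (β : Fin 1) (α : Fin 2) :
    dlt c (Pi.single β (1 : MvP k 3)) α = 0 ∨
      (ee d 0 α ≤ ee d 1 β ∧
        dlt c (Pi.single β (1 : MvP k 3)) α ∈
          homogeneousSubmodule (Fin 4) k (ee d 1 β - ee d 0 α)) := by
  right
  have hβ : β = 0 := Subsingleton.elim _ _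
  rw [hβ, dlt_single c]
  constructor
  · fin_cases α <;> simp [ee]
  · fin_cases α
    · have h2 : ee d 1 (0 : Fin 1) - ee d 0 (0 : Fin 2) = d := by simp [ee]
      simp only [Fin.zero_eta, Matrix.cons_val_zero, h2]
      exact (mem_homogeneousSubmodule _ _).mpr ((Pp_homog c).neg)
    · have h2 : ee d 1 (0 : Fin 1) - ee d 0 (1 : Fin 2) = 1 := by simp [ee]
      simp only [Fin.mk_one, Matrix.cons_val_one, Matrix.head_cons, h2]
      exact (mem_homogeneousSubmodule _ _).mpr (isHomogeneous_X k (3 : Fin 4))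

lemma cond_deg0 (hd : 1 ≤ d) (β : Fin 2) : ((ee d 0 β : ℕ) : ℤ) ≤ (d : ℤ) + (0 : ℕ) := by
  fin_cases β <;> simp [ee] <;> omega

lemma cond_deg1 (β : Fin 1) : ((ee d 1 β : ℕ) : ℤ) ≤ (d : ℤ) + (1 : ℕ) := by
  fin_cases β <;> simp [ee]

lemma exact_tail (i : ℕ) :
    LinearMap.ker (dlts c i) = LinearMap.range (dlts c (i+1)) := by
  match i with
  | 0 =>
      show LinearMap.ker (dlt c) =
        LinearMap.range (0 : (Fin 0 → MvP k 3) →ₗ[MvP k 3] (Fin 1 → MvP k 3))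
      rw [ker_dlt, LinearMap.range_zero]
  | n+1 =>
      ext x
      have hx : x = 0 := funext fun t => t.elim0
      subst hx
      simp

lemma upper_bound {c : Fin d → k} (hc : Function.Injective c) (hd : 1 ≤ d) :
    IdealIsRegular (⨅ i, Iline c i) (d : ℤ) := by
  refine ⟨rho, ee d, dlts c, eps c, ?_, ker_eps c, exact_tail c, ?_, ?_, ?_⟩
  · exact (range_eps c).trans (iInf_Iline_eq hc).symm
  · intro β
    exact cond_eps c β
  · intro i β α
    match i with
    | 0 => exact cond_dlt c β α
    | n+1 => exact β.elim0
  · intro i β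
    match i with
    | 0 => exact cond_deg0 hd β
    | 1 => exact cond_deg1 β
    | n+2 => exact β.elim0

lemma XC_not_dvd {c : Fin d → k} (hc : Function.Injective c) {i j : Fin d} (h : i ≠ j) :
    ¬ (Polynomial.X - Polynomial.C (c i)) ∣ (Polynomial.X - Polynomial.C (c j)) := by
  intro hdvd
  have := map_dvd (Polynomial.evalRingHom (c i)) hdvd
  simp only [Polynomial.coe_evalRingHom, Polynomial.eval_sub, Polynomial.eval_X,
    Polynomial.eval_C, sub_self, zero_dvd_iff, sub_eq_zero] at this
  exact h (hc this)

lemma ps_Pp_ne_zero : ps (Pp c) ≠ 0 := by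
  rw [ps_Pp]
  exact (Polynomial.monic_prod_of_monic _ _ fun i _ => Polynomial.monic_X_sub_C _).ne_zero

lemma lower_bound {c : Fin d → k} (hc : Function.Injective c) {r : ℤ}
    (hr : IdealIsRegular (⨅ i, Iline c i) r) : (d : ℤ) ≤ r := by
  by_contra hlt
  push_neg at hlt
  obtain ⟨ρ, e, δ, ε, hrange, -, -, hhomog, -, hdeg⟩ := hr
  have hg0 : ∀ β : Fin (ρ 0), ps (ε (Pi.single β 1)) = 0 := by
    intro β
    set g := ε (Pi.single β 1) with hgdef
    by_contra hne
    have hgne : g ≠ 0 := by rintro hg; rw [hg, map_zero] at hne; exact hne rfl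
    have hgJ : g ∈ ⨅ i, Iline c i := by
      rw [← hrange]; exact LinearMap.mem_range_self ε _
    rw [Submodule.mem_iInf] at hgJ
    have hdiv : ∀ i, (Polynomial.X - Polynomial.C (c i)) ∣ ps g := by
      intro i
      obtain ⟨a, b, hab⟩ := Ideal.mem_span_pair.mp (hgJ i)
      refine ⟨ps b, ?_⟩
      rw [← hab, map_add, map_mul, map_mul, ps_X3, mul_zero, zero_add, ps_ell, mul_comm]
    have hprod : (∏ i, (Polynomial.X - Polynomial.C (c i))) ∣ ps g :=
      prod_primes_dvd' _ _ (fun i _ => Polynomial.prime_X_sub_C _)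
        (fun i _ j _ hij => XC_not_dvd hc hij) (fun i _ => hdiv i)
    have hnd : (∏ i, (Polynomial.X - Polynomial.C (c i))).natDegree = d := by
      rw [Polynomial.natDegree_prod _ _ (fun i _ => Polynomial.X_sub_C_ne_zero _)]
      simp
    have hled : (d : ℕ) ≤ (ps g).natDegree := by
      rw [← hnd]
      exact Polynomial.natDegree_le_of_dvd hprod hne
    have htd : g.totalDegree ≤ e 0 β :=
      ((mem_homogeneousSubmodule _ _).mp (hhomog β)).totalDegree_le
    have hde : (d : ℕ) ≤ e 0 β :=
      le_trans hled (le_trans (natDegree_ps_le g) htd)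
    have := hdeg 0 β
    push_cast at this
    omega
  have hPmem : Pp c ∈ ⨅ i, Iline c i := (Submodule.mem_iInf _).mpr fun i => Pp_mem c i
  rw [← hrange] at hPmem
  obtain ⟨v, hv⟩ := hPmem
  have hv0 : v = ∑ β, Pi.single β (v β) := by
    funext j
    rw [Finset.sum_apply]
    simp [Pi.single_apply]
  have hsingle : ∀ β : Fin (ρ 0), (Pi.single β (v β) : Fin (ρ 0) → MvP k 3)
      = v β • (Pi.single β 1 : Fin (ρ 0) → MvP k 3) := by
    intro β
    funext j
    simp [Pi.single_apply, mul_ite]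
  have hps : ps (Pp c) = 0 := by
    rw [← hv, hv0]
    simp only [map_sum]
    refine Finset.sum_eq_zero fun β _ => ?_
    rw [hsingle β, map_smul, smul_eq_mul, map_mul, hg0 β, mul_zero]
  exact ps_Pp_ne_zero c hps

end RegSharp
end

/-- Sharpness: for every `d ≥ 1` there is an arrangement of `d` distinct lines in `ℙ³`
(each line cut out by two independent linear forms) whose defining ideal has
regularity at least `d`. -/
theorem exists_line_arrangement_with_large_regularity {k : Type*} [Field k] [Infinite k]
    (d : ℕ) (hd : 1 ≤ d) :
    ∃ I : Fin d → Ideal (MvP k 3),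
      (∀ i, ∃ a b : MvP k 3,
        a ∈ homogeneousSubmodule (Fin 4) k 1 ∧ b ∈ homogeneousSubmodule (Fin 4) k 1 ∧
        LinearIndependent k ![a, b] ∧ I i = Ideal.span {a, b}) ∧
      Function.Injective I ∧
      (d : ℤ) ≤ idealReg (⨅ i, I i) := by
  classical
  set c : Fin d → k := fun i => Infinite.natEmbedding k i.val with hcdef
  have hc : Function.Injective c := fun i j h =>
    Fin.val_injective ((Infinite.natEmbedding k).injective h)
  refine ⟨RegSharp.Iline c, ?_, ?_, ?_⟩
  · intro i
    refine ⟨X 3, RegSharp.ell c i, (mem_homogeneousSubmodule _ _).mpr (isHomogeneous_X _ _),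
      (mem_homogeneousSubmodule _ _).mpr (RegSharp.ell_homog c i), ?_, rfl⟩
    rw [LinearIndependent.pair_iff' (MvPolynomial.X_ne_zero _)]
    intro a ha
    have := congrArg (eval ![(1:k), 0, 0, 0]) ha
    simp [RegSharp.ell, MvPolynomial.smul_eq_C_mul] at this
  · intro i j hij
    have h1 : RegSharp.ell c i ∈ RegSharp.Iline c j := by
      rw [← hij]; exact RegSharp.ell_mem c i
    obtain ⟨a, b, hab⟩ := Ideal.mem_span_pair.mp h1
    have heval := congrArg (eval ![c j, (1:k), 0, 0]) hab
    rw [map_add, map_mul, map_mul, RegSharp.eval_ell, RegSharp.eval_ell] at heval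
    simp only [Matrix.cons_val_zero, Matrix.cons_val_one, Matrix.head_cons, mul_one,
      sub_self, mul_zero, eval_X] at heval
    have h3 : (![c j, (1:k), 0, 0] : Fin 4 → k) 3 = 0 := rfl
    rw [h3] at heval
    simp only [mul_zero, zero_add, add_zero] at heval
    have : c j = c i := by
      have h4 : c j - c i = 0 := by linear_combination -heval
      linear_combination h4
    exact (hc this).symm
  · refine le_csInf ⟨(d:ℤ), ?_⟩ fun r hr => RegSharp.lower_bound hc hr
    exact RegSharp.upper_bound hc hd
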